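/- In chart K₂ of the blow-up (u = r₂, v = r₂v₂), the Jacobian of the desingularized system at (r₂,v₂) = (0,0) is diagonal with eigenvalues λ_r = ε(α−1) and λ_v = β − d − αε. Hence for β − d − αε > 0: if α > 1 the origin is a hyperbolic source, and if 0 < α < 1 it is a hyperbolic saddle. -/

import Mathlib

/-- Chart K₂ desingularized vector field: r₂-component. -/
noncomputable def K2r (α θ β ε : ℝ) (r v : ℝ) : ℝ :=
  r * (-(α * ε) * (1 + v) * (1 + θ * v) * (r * v + r - 1) - β * v - ε * (1 + v))

/-- Chart K₂ desingularized vector field: v₂-component. -/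
noncomputable def K2v (α θ β d ε : ℝ) (r v : ℝ) : ℝ :=
  v * (α * ε * (1 + v) * (1 + θ * v) * (r * v + r - 1) + β * v + β - d * (1 + v))

lemma deriv_quad (a b : ℝ) : deriv (fun x : ℝ => a * x ^ 2 + b * x) 0 = b := by
  have h : HasDerivAt (fun x : ℝ => a * x ^ 2 + b * x)
      (a * (2 * (0:ℝ) ^ 1) + b * 1) 0 := by
    exact ((hasDerivAt_pow 2 (0:ℝ)).const_mul a).add ((hasDerivAt_id (0:ℝ)).const_mul b)
  have := h.deriv
  simpa using this

/-- In chart K₂: the Jacobian at the origin is diagonal with eigenvalues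
λ_r = ε(α−1) and λ_v = β − d − αε. Hence for β − d − αε > 0: if α > 1 the origin
is a hyperbolic source, and if 0 < α < 1 a hyperbolic saddle. -/
theorem chartK2_origin (α θ β d ε : ℝ)
    (hα : 0 < α) (hβ : 0 < β) (hd : 0 < d) (hε : 0 < ε)
    (hθ0 : 0 ≤ θ) (hθ1 : θ ≤ 1)
    (hβd : 0 < β - d - α * ε) :
    (!![deriv (fun r => K2r α θ β ε r 0) 0,
        deriv (fun v => K2r α θ β ε 0 v) 0;
        deriv (fun r => K2v α θ β d ε r 0) 0,
        deriv (fun v => K2v α θ β d ε 0 v) 0])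
      = !![ε * (α - 1), 0; 0, β - d - α * ε] ∧
    (1 < α → 0 < ε * (α - 1) ∧ 0 < β - d - α * ε) ∧
    (α < 1 → ε * (α - 1) < 0 ∧ 0 < β - d - α * ε) := by
  have h11 : deriv (fun r => K2r α θ β ε r 0) 0 = ε * (α - 1) := by
    have he : (fun r => K2r α θ β ε r 0)
        = fun r : ℝ => (-(α * ε)) * r ^ 2 + (ε * (α - 1)) * r := by
      funext r; simp only [K2r]; ring
    rw [he, deriv_quad]
  have h12 : deriv (fun v => K2r α θ β ε 0 v) 0 = 0 := by
    have he : (fun v => K2r α θ β ε 0 v) = fun _ : ℝ => (0:ℝ) := by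
      funext v; simp [K2r]
    rw [he, deriv_const]
  have h21 : deriv (fun r => K2v α θ β d ε r 0) 0 = 0 := by
    have he : (fun r => K2v α θ β d ε r 0) = fun _ : ℝ => (0:ℝ) := by
      funext r; simp [K2v]
    rw [he, deriv_const]
  have h22 : deriv (fun v => K2v α θ β d ε 0 v) 0 = β - d - α * ε := by
    have he : (fun v => K2v α θ β d ε 0 v)
        = fun v : ℝ => ((-(α * ε * θ)) * v ^ 2 + (β - d - α * ε - α * ε * θ) * v
            + (β - d - α * ε)) * v := by
      funext v; simp only [K2v]; ring
    have h : HasDerivAt (fun v : ℝ => (-(α * ε * θ)) * v ^ 2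
        + (β - d - α * ε - α * ε * θ) * v + (β - d - α * ε))
        (β - d - α * ε - α * ε * θ) 0 := by
      have := (((hasDerivAt_pow 2 (0:ℝ)).const_mul (-(α * ε * θ))).add
        ((hasDerivAt_id (0:ℝ)).const_mul (β - d - α * ε - α * ε * θ))).add_const
        (β - d - α * ε)
      simpa using this
    have h2 : HasDerivAt (fun v : ℝ => ((-(α * ε * θ)) * v ^ 2
        + (β - d - α * ε - α * ε * θ) * v + (β - d - α * ε)) * v)
        (β - d - α * ε) 0 := by
      have := h.fun_mul (hasDerivAt_id (0:ℝ))
      simpa using this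
    rw [he, h2.deriv]
  refine ⟨by rw [h11, h12, h21, h22], fun h => ⟨by nlinarith, hβd⟩,
    fun h => ⟨by nlinarith, hβd⟩⟩
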